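/- For natural numbers s ≥ 1, k ≥ 2s+1, and 0 ≤ l ≤ k−s, the following identity holds: ∑_{j=0}^{s} (-1)^j·C(s+j,j)·C(k,s−j)·[C(l+j,j)·(k−s) − C(l+j−1,j−1)·l] = ∑_{j=0}^{s} (-1)^j·C(s+j,j)·C(k+1,s−j)·C(l+j,j)·(k−2s). -/

import Mathlib

theorem equivariance_identity_one (s k l : ℕ) (hs : 1 ≤ s) (hk : 2 * s + 1 ≤ k)
    (hl : l ≤ k - s) :
    ∑ j ∈ Finset.range (s + 1),
        (-1 : ℤ) ^ j * ((s + j).choose j) * (k.choose (s - j)) *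
          (((l + j).choose j : ℤ) * ((k : ℤ) - s) -
            (if j = 0 then 0 else ((l + j - 1).choose (j - 1) : ℤ)) * l) =
      ∑ j ∈ Finset.range (s + 1),
        (-1 : ℤ) ^ j * ((s + j).choose j) * ((k + 1).choose (s - j)) *
          ((l + j).choose j) * ((k : ℤ) - 2 * s) := by
  set F : ℕ → ℤ := fun j =>
    if j ≤ s then
      (-1 : ℤ) ^ j * j * ((s + j).choose j) * (k.choose (s - j)) *
        ((l + j - 1).choose (j - 1))
    else 0 with hF
  have key : ∀ j ∈ Finset.range (s + 1),
      (-1 : ℤ) ^ j * ((s + j).choose j) * (k.choose (s - j)) *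
          (((l + j).choose j : ℤ) * ((k : ℤ) - s) -
            (if j = 0 then 0 else ((l + j - 1).choose (j - 1) : ℤ)) * l)
        - (-1 : ℤ) ^ j * ((s + j).choose j) * ((k + 1).choose (s - j)) *
          ((l + j).choose j) * ((k : ℤ) - 2 * s)
      = F j - F (j + 1) := by
    intro j hj
    rw [Finset.mem_range] at hj
    have hjs : j ≤ s := Nat.lt_succ_iff.mp hj
    rcases Nat.eq_zero_or_pos j with rfl | hj1
    · -- j = 0
      obtain ⟨e, rfl⟩ : ∃ e, s = e + 1 := ⟨s - 1, (Nat.succ_pred_eq_of_pos hs).symm⟩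
      have hek : e ≤ k := by omega
      have hC' : (k.choose (e + 1) : ℤ) * ((e : ℤ) + 1) = k.choose e * ((k : ℤ) - e) := by
        have h := congrArg (Nat.cast (R := ℤ)) (Nat.choose_succ_right_eq k e)
        push_cast [Nat.cast_sub hek] at h
        linear_combination h
      simp only [hF]
      norm_num [Nat.choose_zero_right, Nat.choose_one_right]
      push_cast [Nat.choose_succ_succ]
      linear_combination hC'
    · -- j ≥ 1
      obtain ⟨j', rfl⟩ : ∃ j'', j = j'' + 1 := ⟨j - 1, (Nat.succ_pred_eq_of_pos hj1).symm⟩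
      have hA : ((l : ℤ) + (j' + 1)) * ((l + j').choose j') =
          ((l + (j' + 1)).choose (j' + 1)) * ((j' : ℤ) + 1) := by
        exact_mod_cast congrArg (Nat.cast (R := ℤ)) (Nat.add_one_mul_choose_eq (l + j') j')
      rcases eq_or_lt_of_le hjs with heq | hlt
      · -- j = s
        subst heq
        simp only [hF]
        rw [if_pos le_rfl, if_neg (by omega : ¬ j' + 1 + 1 ≤ j' + 1),
          if_neg (by omega : ¬ j' + 1 = 0),
          show l + (j' + 1) - 1 = l + j' from by omega,
          show j' + 1 - 1 = j' from by omega,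
          Nat.sub_self, Nat.choose_zero_right, Nat.choose_zero_right]
        push_cast
        linear_combination (-((-1:ℤ))^(j'+1)) * ((j' + 1 + (j' + 1)).choose (j' + 1) : ℤ) * hA
      · -- j < s
        obtain ⟨e, rfl⟩ : ∃ e, s = j' + 1 + e + 1 := ⟨s - j' - 2, by omega⟩
        have hek : e ≤ k := by omega
        have hC' : (k.choose (e + 1) : ℤ) * ((e : ℤ) + 1) = k.choose e * ((k : ℤ) - e) := by
          have h := congrArg (Nat.cast (R := ℤ)) (Nat.choose_succ_right_eq k e)
          push_cast [Nat.cast_sub hek] at h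
          linear_combination h
        have hP : ((k + 1).choose (e + 1) : ℤ) = k.choose e + k.choose (e + 1) := by
          exact_mod_cast congrArg (Nat.cast (R := ℤ)) (Nat.choose_succ_succ k e)
        have hB : (((j' : ℤ) + 1 + e + 1) + (j' + 1) + 1) *
              ((j' + 1 + e + 1 + (j' + 1)).choose (j' + 1)) =
            ((j' + 1 + e + 1 + (j' + 1 + 1)).choose (j' + 1 + 1)) * ((j' : ℤ) + 1 + 1) := by
          have h := Nat.add_one_mul_choose_eq (j' + 1 + e + 1 + (j' + 1)) (j' + 1)
          rw [show (j' + 1 + e + 1 + (j' + 1) + 1).choose (j' + 1 + 1) = (j' + 1 + e + 1 + (j' + 1 + 1)).choose (j' + 1 + 1) from rfl] at h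
          exact_mod_cast congrArg (Nat.cast (R := ℤ)) h
        simp only [hF]
        rw [if_pos (by omega : j' + 1 ≤ j' + 1 + e + 1),
          if_pos (by omega : j' + 1 + 1 ≤ j' + 1 + e + 1),
          if_neg (by omega : ¬ j' + 1 = 0),
          show j' + 1 + e + 1 - (j' + 1) = e + 1 from by omega,
          show j' + 1 + e + 1 - (j' + 1 + 1) = e from by omega,
          show l + (j' + 1) - 1 = l + j' from by omega,
          show j' + 1 - 1 = j' from by omega,
          show l + (j' + 1 + 1) - 1 = l + (j' + 1) from by omega,
          show j' + 1 + 1 - 1 = j' + 1 from by omega]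
        push_cast
        linear_combination
          (-(((-1:ℤ))^(j'+1) * (((j' + 1 + e + 1 + (j' + 1)).choose (j' + 1) : ℤ)) *
              ((k.choose (e+1) : ℤ)))) * hA
          + (((-1:ℤ))^(j'+1) * ((k.choose e : ℤ)) * (((l + (j' + 1)).choose (j' + 1) : ℤ))) * hB
          + (((-1:ℤ))^(j'+1) * (((j' + 1 + e + 1 + (j' + 1)).choose (j' + 1) : ℤ)) *
              (((l + (j' + 1)).choose (j' + 1) : ℤ))) * hC'
          + (-(((-1:ℤ))^(j'+1) * (((j' + 1 + e + 1 + (j' + 1)).choose (j' + 1) : ℤ)) *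
              (((l + (j' + 1)).choose (j' + 1) : ℤ)) * ((k:ℤ) - 2*((j':ℤ) + 1 + e + 1)))) * hP
  rw [← sub_eq_zero, ← Finset.sum_sub_distrib, Finset.sum_congr rfl key,
    Finset.sum_range_sub']
  simp [hF]
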